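/- For all indices i, j, k one has C_i^{jk}(p) = −((m−2)/(2K))·[ a_i^{jk} − (δ_i^j a^k + δ_i^k a^j) + a_i·(2a^j a^k − a^{jk}) ], where δ denotes the Kronecker delta. -/

import Mathlib

open Finset

noncomputable section

/-- `A(p) = ∑ a^{i₁…i_m} p_{i₁}⋯p_{i_m}`, where `m = M + 3 ≥ 3`. -/
def Afun {n M : ℕ} (a : (Fin (M + 3) → Fin n) → ℝ) (p : Fin n → ℝ) : ℝ :=
  ∑ ι : Fin (M + 3) → Fin n, a ι * ∏ t, p (ι t)

/-- `K(p) = A(p)^{1/m}`. -/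
def Kfun {n M : ℕ} (a : (Fin (M + 3) → Fin n) → ℝ) (p : Fin n → ℝ) : ℝ :=
  Afun a p ^ ((1 : ℝ) / (M + 3))

/-- `a^i = (∑ a^{i i₂…i_m} p_{i₂}⋯p_{i_m}) / K^{m-1}`. -/
def aU1 {n M : ℕ} (a : (Fin (M + 3) → Fin n) → ℝ) (i : Fin n) (p : Fin n → ℝ) : ℝ :=
  (∑ ι : Fin (M + 2) → Fin n, a (Fin.cons i ι) * ∏ t, p (ι t)) / Kfun a p ^ (M + 2)

/-- `a^{ij} = (∑ a^{i j i₃…i_m} p_{i₃}⋯p_{i_m}) / K^{m-2}`. -/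
def aU2 {n M : ℕ} (a : (Fin (M + 3) → Fin n) → ℝ) (i j : Fin n) (p : Fin n → ℝ) : ℝ :=
  (∑ ι : Fin (M + 1) → Fin n, a (Fin.cons i (Fin.cons j ι)) * ∏ t, p (ι t)) / Kfun a p ^ (M + 1)

/-- `a^{ijk} = (∑ a^{i j k i₄…i_m} p_{i₄}⋯p_{i_m}) / K^{m-3}`. -/
def aU3 {n M : ℕ} (a : (Fin (M + 3) → Fin n) → ℝ) (i j k : Fin n) (p : Fin n → ℝ) : ℝ :=
  (∑ ι : Fin M → Fin n, a (Fin.cons i (Fin.cons j (Fin.cons k ι))) * ∏ t, p (ι t)) / Kfun a p ^ M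

/-- Partial derivative `∂f/∂p_k` of a function of `p`. -/
def pd {n : ℕ} (f : (Fin n → ℝ) → ℝ) (k : Fin n) (p : Fin n → ℝ) : ℝ :=
  deriv (fun t => f (Function.update p k t)) (p k)

/-- Fundamental metrical d-tensor `g^{ij} = (1/2) ∂²(K²)/∂p_i∂p_j`. -/
def gU {n M : ℕ} (a : (Fin (M + 3) → Fin n) → ℝ) (i j : Fin n) (p : Fin n → ℝ) : ℝ :=
  (1 / 2 : ℝ) * pd (fun q => pd (fun r => Kfun a r ^ 2) j q) i p

/-- Angular metrical d-tensor `h^{ij} = K ∂²K/∂p_i∂p_j`. -/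
def hU {n M : ℕ} (a : (Fin (M + 3) → Fin n) → ℝ) (i j : Fin n) (p : Fin n → ℝ) : ℝ :=
  Kfun a p * pd (fun q => pd (Kfun a) j q) i p

/-- v-torsion d-tensor `C^{ijk} = -(1/2) ∂g^{ij}/∂p_k`. -/
def CU {n M : ℕ} (a : (Fin (M + 3) → Fin n) → ℝ) (i j k : Fin n) (p : Fin n → ℝ) : ℝ :=
  -(1 / 2 : ℝ) * pd (gU a i j) k p

/-- Symmetry of `a` in all of its `m` indices. -/
def aSym {n M : ℕ} (a : (Fin (M + 3) → Fin n) → ℝ) : Prop :=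
  ∀ (σ : Equiv.Perm (Fin (M + 3))) (ι : Fin (M + 3) → Fin n), a (ι ∘ σ) = a ι

/-- `a_i = ∑_s a_{is} a^s`, where `aLow` is the inverse matrix of `(a^{ij})`. -/
def aL {n M : ℕ} (a : (Fin (M + 3) → Fin n) → ℝ) (aLow : Matrix (Fin n) (Fin n) ℝ)
    (p : Fin n → ℝ) (i : Fin n) : ℝ :=
  ∑ s, aLow i s * aU1 a s p

/-- `a_i^{jk} = ∑_s a_{is} a^{sjk}`. -/
def aL3 {n M : ℕ} (a : (Fin (M + 3) → Fin n) → ℝ) (aLow : Matrix (Fin n) (Fin n) ℝ)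
    (p : Fin n → ℝ) (i j k : Fin n) : ℝ :=
  ∑ s, aLow i s * aU3 a s j k p

/-- `g_{ij} = (1/(m-1)) a_{ij} + ((m-2)/(m-1)) a_i a_j`, the inverse of `g^{ij}`. -/
def gL {n M : ℕ} (a : (Fin (M + 3) → Fin n) → ℝ) (aLow : Matrix (Fin n) (Fin n) ℝ)
    (p : Fin n → ℝ) (i j : Fin n) : ℝ :=
  (1 / (M + 2 : ℝ)) * aLow i j + ((M + 1 : ℝ) / (M + 2)) * aL a aLow p i * aL a aLow p j

/-- v-derivation components `C_i^{jk} = ∑_s g_{is} C^{sjk}`. -/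
def CL {n M : ℕ} (a : (Fin (M + 3) → Fin n) → ℝ) (aLow : Matrix (Fin n) (Fin n) ℝ)
    (p : Fin n → ℝ) (i j k : Fin n) : ℝ :=
  ∑ s, gL a aLow p i s * CU a s j k p

/-- v-curvature d-tensor `S^{hijk} = ∑_r (C_r^{ij} C^{rhk} - C_r^{ik} C^{rhj})`. -/
def Scurv {n M : ℕ} (a : (Fin (M + 3) → Fin n) → ℝ) (aLow : Matrix (Fin n) (Fin n) ℝ)
    (p : Fin n → ℝ) (h i j k : Fin n) : ℝ :=
  ∑ r, (CL a aLow p r i j * CU a r h k p - CL a aLow p r i k * CU a r h j p)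

/-- `U^{hijk} = ∑_r (a_r^{ij} a^{rhk} - a_r^{ik} a^{rhj})`. -/
def Ufun {n M : ℕ} (a : (Fin (M + 3) → Fin n) → ℝ) (aLow : Matrix (Fin n) (Fin n) ℝ)
    (p : Fin n → ℝ) (h i j k : Fin n) : ℝ :=
  ∑ r, (aL3 a aLow p r i j * aU3 a r h k p - aL3 a aLow p r i k * aU3 a r h j p)


/-- generic polynomial sum -/
def Psum {n r : ℕ} (c : (Fin r → Fin n) → ℝ) (p : Fin n → ℝ) : ℝ :=
  ∑ ι : Fin r → Fin n, c ι * ∏ t, p (ι t)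

theorem prod_erase_zero {r : ℕ} (f : Fin (r+1) → ℝ) :
    ∏ s ∈ Finset.univ.erase (0 : Fin (r+1)), f s = ∏ v : Fin r, f v.succ := by
  rw [Fin.univ_succ, Finset.erase_cons, Finset.prod_map]
  rfl

theorem Psum_succ {n r : ℕ} (c : (Fin (r+1) → Fin n) → ℝ) (p : Fin n → ℝ) :
    Psum c p = ∑ x, p x * Psum (fun ι => c (Fin.cons x ι)) p := by
  rw [Psum, ← Equiv.sum_comp (Fin.consEquiv (fun _ => Fin n))
    (fun ι => c ι * ∏ t, p (ι t)), Fintype.sum_prod_type]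
  refine Finset.sum_congr rfl fun x _ => ?_
  rw [Psum, Finset.mul_sum]
  refine Finset.sum_congr rfl fun ι _ => ?_
  simp only [Fin.consEquiv, Equiv.coe_fn_mk, Fin.prod_univ_succ, Fin.cons_zero, Fin.cons_succ]
  ring
theorem hasDerivAt_Psum {n r : ℕ} {c : (Fin (r+1) → Fin n) → ℝ}
    (hc : ∀ (σ : Equiv.Perm (Fin (r+1))) ι, c (ι ∘ σ) = c ι)
    (k : Fin n) (p : Fin n → ℝ) :
    HasDerivAt (fun x => Psum c (Function.update p k x))
      ((r+1) * Psum (fun ι => c (Fin.cons k ι)) p) (p k) := by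
  have hterm : ∀ ι : Fin (r+1) → Fin n,
      HasDerivAt (fun x => ∏ t, Function.update p k x (ι t))
        (∑ t, (∏ s ∈ Finset.univ.erase t, p (ι s)) * (if ι t = k then 1 else 0)) (p k) := by
    intro ι
    have h := HasDerivAt.fun_finsetProd (u := Finset.univ)
      (f := fun t x => Function.update p k x (ι t))
      (f' := fun t => if ι t = k then (1:ℝ) else 0) (x := p k) ?_
    · refine h.congr_deriv (Eq.symm ?_)
      refine Finset.sum_congr rfl fun t _ => ?_
      rw [smul_eq_mul]
      congr 1
      refine Finset.prod_congr rfl fun s _ => ?_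
      rw [Function.update_eq_self]
    · intro t _
      by_cases h : ι t = k
      · subst h
        simpa using (hasDerivAt_id' (x := p (ι t)))
      · simpa [h, Function.update_of_ne h] using (hasDerivAt_const (p k) (p (ι t)))
  have key : ∀ t : Fin (r+1),
      (∑ ι : Fin (r+1) → Fin n,
        c ι * ((∏ s ∈ Finset.univ.erase t, p (ι s)) * (if ι t = k then 1 else 0)))
      = Psum (fun ι => c (Fin.cons k ι)) p := by
    intro t
    have hmap : (Finset.univ.erase (0 : Fin (r+1))).map (Equiv.swap 0 t).toEmbedding
        = Finset.univ.erase t := by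
      rw [Finset.map_erase, Finset.map_univ_equiv]
      simp
    have hstep : ∀ ι : Fin (r+1) → Fin n,
        c (((Equiv.swap (0 : Fin (r+1)) t).arrowCongr (Equiv.refl (Fin n))) ι) *
          ((∏ s ∈ Finset.univ.erase t,
            p ((((Equiv.swap (0 : Fin (r+1)) t).arrowCongr (Equiv.refl (Fin n))) ι) s)) *
            (if (((Equiv.swap (0 : Fin (r+1)) t).arrowCongr (Equiv.refl (Fin n))) ι) t = k
              then 1 else 0))
        = c ι * ((∏ s ∈ Finset.univ.erase (0:Fin (r+1)), p (ι s)) *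
            (if ι 0 = k then 1 else 0)) := by
      intro ι
      have step1 : ((Equiv.swap (0 : Fin (r+1)) t).arrowCongr (Equiv.refl (Fin n))) ι
          = ι ∘ (Equiv.swap (0 : Fin (r+1)) t) := by
        funext x
        simp [Equiv.arrowCongr, Equiv.symm_swap]
      rw [step1, hc (Equiv.swap 0 t) ι]
      show c ι * ((∏ s ∈ Finset.univ.erase t, p (ι (Equiv.swap 0 t s))) *
          (if ι (Equiv.swap 0 t t) = k then 1 else 0))
        = c ι * ((∏ s ∈ Finset.univ.erase (0 : Fin (r+1)), p (ι s)) * (if ι 0 = k then 1 else 0))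
      rw [Equiv.swap_apply_right, ← hmap, Finset.prod_map]
      congr 1
      congr 1
      exact Finset.prod_congr rfl fun s _ => by simp
    rw [← Equiv.sum_comp ((Equiv.swap (0 : Fin (r+1)) t).arrowCongr (Equiv.refl (Fin n)))
      (fun ι => c ι * ((∏ s ∈ Finset.univ.erase t, p (ι s)) * (if ι t = k then 1 else 0)))]
    refine Eq.trans (Finset.sum_congr rfl fun ι _ => hstep ι) ?_
    · rw [← Equiv.sum_comp (Fin.consEquiv (fun _ => Fin n))
        (fun ι => c ι * ((∏ s ∈ Finset.univ.erase (0:Fin (r+1)), p (ι s)) *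
          (if ι 0 = k then 1 else 0))), Fintype.sum_prod_type]
      simp only [Fin.consEquiv, Equiv.coe_fn_mk, Fin.cons_zero, mul_ite, mul_one, mul_zero]
      rw [Finset.sum_comm]
      simp only [Finset.sum_ite_eq', Finset.mem_univ, if_true, Psum]
      refine Finset.sum_congr rfl fun ι _ => ?_
      rw [prod_erase_zero]
      simp [Fin.cons_succ]
  have hsum := HasDerivAt.fun_sum (fun ι (_ : ι ∈ Finset.univ) => (hterm ι).const_mul (c ι))
  have hval : (∑ ι : Fin (r+1) → Fin n, c ι *
        (∑ t, (∏ s ∈ Finset.univ.erase t, p (ι s)) * (if ι t = k then 1 else 0)))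
      = (r+1) * Psum (fun ι => c (Fin.cons k ι)) p := by
    simp only [Finset.mul_sum]
    rw [Finset.sum_comm, Finset.sum_congr rfl (fun t _ => key t), Finset.sum_const,
      Finset.card_univ, Fintype.card_fin, nsmul_eq_mul]
    push_cast; ring
  rw [← hval]
  exact hsum
/-- Extend a permutation of `Fin r` to `Fin (r+1)` fixing `0`. -/
def extPerm {r : ℕ} (σ : Equiv.Perm (Fin r)) : Equiv.Perm (Fin (r+1)) where
  toFun := Fin.cons 0 (Fin.succ ∘ σ)
  invFun := Fin.cons 0 (Fin.succ ∘ σ.symm)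
  left_inv x := by refine Fin.cases ?_ (fun y => ?_) x <;> simp
  right_inv x := by refine Fin.cases ?_ (fun y => ?_) x <;> simp

theorem cons_comp_extPerm {n r : ℕ} (i : Fin n) (ι : Fin r → Fin n) (σ : Equiv.Perm (Fin r)) :
    (Fin.cons i ι) ∘ (extPerm σ) = Fin.cons i (ι ∘ σ) := by
  funext x
  refine Fin.cases ?_ (fun y => ?_) x <;> simp [extPerm]

theorem sym_cons {n r : ℕ} {c : (Fin (r+1) → Fin n) → ℝ}
    (hc : ∀ (σ : Equiv.Perm (Fin (r+1))) ι, c (ι ∘ σ) = c ι) (i : Fin n)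
    (σ : Equiv.Perm (Fin r)) (ι : Fin r → Fin n) :
    c (Fin.cons i (ι ∘ σ)) = c (Fin.cons i ι) := by
  rw [← cons_comp_extPerm, hc]

theorem cons_cons_swap {n r : ℕ} (x y : Fin n) (g : Fin r → Fin n) :
    (Fin.cons x (Fin.cons y g)) ∘ (Equiv.swap (0 : Fin (r+2)) 1) = Fin.cons y (Fin.cons x g) := by
  funext z
  refine Fin.cases ?_ (fun w => ?_) z
  · simp [Equiv.swap_apply_left, Fin.cons_one]
  · refine Fin.cases ?_ (fun v => ?_) w
    · simp [Fin.succ_zero_eq_one, Equiv.swap_apply_right, Fin.cons_succ]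
    · have h1 : ((v.succ.succ : Fin (r+2))) ≠ 0 := Fin.succ_ne_zero _
      have h2 : ((v.succ.succ : Fin (r+2))) ≠ 1 := by
        simp only [Fin.ne_iff_vne, Fin.val_succ, Fin.val_one]
        omega
      rw [Function.comp_apply, Equiv.swap_apply_of_ne_of_ne h1 h2]
      simp [Fin.cons_succ]
section Core

variable {n M : ℕ} {a : (Fin (M + 3) → Fin n) → ℝ}

theorem aU1_eq (i : Fin n) (q : Fin n → ℝ) :
    aU1 a i q = Psum (fun ι => a (Fin.cons i ι)) q / Kfun a q ^ (M+2) := rfl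

theorem aU2_eq (i j : Fin n) (q : Fin n → ℝ) :
    aU2 a i j q = Psum (fun ι => a (Fin.cons i (Fin.cons j ι))) q / Kfun a q ^ (M+1) := rfl

theorem aU3_eq (i j k : Fin n) (q : Fin n → ℝ) :
    aU3 a i j k q
      = Psum (fun ι => a (Fin.cons i (Fin.cons j (Fin.cons k ι)))) q / Kfun a q ^ M := rfl

theorem Kfun_pos {q : Fin n → ℝ} (hq : 0 < Afun a q) : 0 < Kfun a q :=
  Real.rpow_pos_of_pos hq _

theorem Kfun_pow {q : Fin n → ℝ} (hq : 0 < Afun a q) (s : ℕ) :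
    Kfun a q ^ s = Afun a q ^ ((s : ℝ) / (M + 3)) := by
  rw [Kfun, ← Real.rpow_natCast (Afun a q ^ ((1:ℝ)/(M+3))) s, ← Real.rpow_mul hq.le]
  congr 1
  ring

theorem hA' (hsym : aSym a) (q : Fin n → ℝ) (k : Fin n) :
    HasDerivAt (fun x => Afun a (Function.update q k x))
      (((M:ℝ)+3) * Psum (fun ι => a (Fin.cons k ι)) q) (q k) := by
  have h := hasDerivAt_Psum (c := a) hsym k q
  refine h.congr_deriv (Eq.symm ?_)
  push_cast
  ring

theorem hK' (hsym : aSym a) {q : Fin n → ℝ} (hq : 0 < Afun a q) (k : Fin n) :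
    HasDerivAt (fun x => Kfun a (Function.update q k x)) (aU1 a k q) (q k) := by
  have h := (hA' hsym q k).rpow_const (p := (1:ℝ)/((M:ℝ)+3))
    (Or.inl (by rw [Function.update_eq_self]; exact hq.ne'))
  simp only [Function.update_eq_self] at h
  have hM3 : ((M:ℝ) + 3) ≠ 0 := by positivity
  have e1 : (1:ℝ)/((M:ℝ)+3) - 1 = -(((M:ℝ)+2)/((M:ℝ)+3)) := by field_simp; ring
  have e2 : Kfun a q ^ (M+2) = Afun a q ^ (((M:ℝ)+2) / ((M:ℝ)+3)) := by
    rw [Kfun_pow hq (M+2)]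
    push_cast
    ring_nf
  have hKne : Kfun a q ^ (M+2) ≠ 0 := pow_ne_zero _ (Kfun_pos hq).ne'
  refine h.congr_deriv (Eq.symm ?_)
  rw [aU1_eq, e1, Real.rpow_neg hq.le, ← e2]
  field_simp

end Core
section Core2

variable {n M : ℕ} {a : (Fin (M + 3) → Fin n) → ℝ}

theorem hN1' (hsym : aSym a) (q : Fin n → ℝ) (i k : Fin n) :
    HasDerivAt (fun x => Psum (fun ι => a (Fin.cons i ι)) (Function.update q k x))
      (((M:ℝ)+2) * Psum (fun ι => a (Fin.cons i (Fin.cons k ι))) q) (q k) := by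
  have h := hasDerivAt_Psum (c := fun ι => a (Fin.cons i ι))
    (fun σ ι => sym_cons hsym i σ ι) k q
  convert h using 1
  push_cast
  ring

theorem hN2' (hsym : aSym a) (q : Fin n → ℝ) (i j k : Fin n) :
    HasDerivAt (fun x => Psum (fun ι => a (Fin.cons i (Fin.cons j ι))) (Function.update q k x))
      (((M:ℝ)+1) * Psum (fun ι => a (Fin.cons i (Fin.cons j (Fin.cons k ι)))) q) (q k) := by
  have h := hasDerivAt_Psum (c := fun ι => a (Fin.cons i (Fin.cons j ι)))
    (fun σ ι => sym_cons (c := fun κ => a (Fin.cons i κ))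
      (fun σ' κ => sym_cons hsym i σ' κ) j σ ι) k q
  convert h using 1

theorem haU1' (hsym : aSym a) {q : Fin n → ℝ} (hq : 0 < Afun a q) (i k : Fin n) :
    HasDerivAt (fun x => aU1 a i (Function.update q k x))
      (((M:ℝ)+2) * (aU2 a i k q - aU1 a i q * aU1 a k q) / Kfun a q) (q k) := by
  have hKpos := Kfun_pos hq
  have hd := (hN1' hsym q i k).fun_div ((hK' hsym hq k).fun_pow (M+2))
    (by rw [Function.update_eq_self]; exact pow_ne_zero _ hKpos.ne')
  simp only [Function.update_eq_self] at hd
  refine hd.congr_deriv (Eq.symm ?_)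
  rw [show M + 2 - 1 = M + 1 from rfl]
  rw [aU1_eq, aU1_eq, aU2_eq]
  field_simp
  push_cast
  ring

theorem haU2' (hsym : aSym a) {q : Fin n → ℝ} (hq : 0 < Afun a q) (i j k : Fin n) :
    HasDerivAt (fun x => aU2 a i j (Function.update q k x))
      (((M:ℝ)+1) * (aU3 a i j k q - aU2 a i j q * aU1 a k q) / Kfun a q) (q k) := by
  have hKpos := Kfun_pos hq
  have hd := (hN2' hsym q i j k).fun_div ((hK' hsym hq k).fun_pow (M+1))
    (by rw [Function.update_eq_self]; exact pow_ne_zero _ hKpos.ne')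
  simp only [Function.update_eq_self] at hd
  refine hd.congr_deriv (Eq.symm ?_)
  rw [show M + 1 - 1 = M from rfl]
  rw [aU1_eq, aU2_eq, aU3_eq]
  field_simp
  push_cast
  ring

end Core2
section Core3

variable {n M : ℕ} {a : (Fin (M + 3) → Fin n) → ℝ}

theorem pdK2_eq (hsym : aSym a) {q : Fin n → ℝ} (hq : 0 < Afun a q) (j : Fin n) :
    pd (fun r => Kfun a r ^ 2) j q = 2 * Kfun a q * aU1 a j q := by
  rw [pd]
  have h := ((hK' hsym hq j).fun_pow 2).deriv
  simp only [Function.update_eq_self] at h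
  rw [h]
  norm_num

theorem afun_evpos (hsym : aSym a) {q : Fin n → ℝ} (hq : 0 < Afun a q) (i : Fin n) :
    ∀ᶠ t in nhds (q i), 0 < Afun a (Function.update q i t) := by
  have hc := (hA' hsym q i).continuousAt
  refine hc.eventually ?_
  simp only [Function.update_eq_self]
  exact eventually_gt_nhds hq

theorem gU_eq (hsym : aSym a) {q : Fin n → ℝ} (hq : 0 < Afun a q) (i j : Fin n) :
    gU a i j q = ((M:ℝ)+2) * aU2 a j i q - ((M:ℝ)+1) * (aU1 a i q * aU1 a j q) := by
  have hev : (fun t => pd (fun r => Kfun a r ^ 2) j (Function.update q i t))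
      =ᶠ[nhds (q i)]
      (fun t => 2 * Kfun a (Function.update q i t) * aU1 a j (Function.update q i t)) := by
    filter_upwards [afun_evpos hsym hq i] with t ht
    exact pdK2_eq hsym ht j
  rw [gU, pd, hev.deriv_eq]
  have hd := ((hK' hsym hq i).const_mul 2).fun_mul (haU1' hsym hq j i)
  simp only [Function.update_eq_self] at hd
  rw [hd.deriv]
  have hKne := (Kfun_pos hq).ne'
  field_simp
  ring

theorem CU_eq (hsym : aSym a) {q : Fin n → ℝ} (hq : 0 < Afun a q) (i j k : Fin n) :
    CU a i j k q = -(((M:ℝ)+2)*((M:ℝ)+1)/(2*Kfun a q)) *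
      (aU3 a j i k q - aU1 a k q * aU2 a j i q - aU1 a j q * aU2 a i k q
        - aU1 a i q * aU2 a j k q + 2 * (aU1 a i q * aU1 a j q * aU1 a k q)) := by
  have hev : (fun t => gU a i j (Function.update q k t)) =ᶠ[nhds (q k)]
      (fun t => ((M:ℝ)+2) * aU2 a j i (Function.update q k t)
        - ((M:ℝ)+1) * (aU1 a i (Function.update q k t) * aU1 a j (Function.update q k t))) := by
    filter_upwards [afun_evpos hsym hq k] with t ht
    exact gU_eq hsym ht i j
  rw [CU, pd, hev.deriv_eq]
  have hd := ((haU2' hsym hq j i k).const_mul ((M:ℝ)+2)).fun_sub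
    (((haU1' hsym hq i k).fun_mul (haU1' hsym hq j k)).const_mul ((M:ℝ)+1))
  simp only [Function.update_eq_self] at hd
  rw [hd.deriv]
  have hKne := (Kfun_pos hq).ne'
  field_simp
  ring

end Core3
section Core4

variable {n M : ℕ} {a : (Fin (M + 3) → Fin n) → ℝ}

theorem acoef_swap12 (hsym : aSym a) (i j : Fin n) (ι : Fin (M+1) → Fin n) :
    a (Fin.cons i (Fin.cons j ι)) = a (Fin.cons j (Fin.cons i ι)) := by
  rw [← cons_cons_swap j i ι]
  exact hsym _ _

theorem aU2_symm (hsym : aSym a) (i j : Fin n) (q : Fin n → ℝ) :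
    aU2 a i j q = aU2 a j i q := by
  rw [aU2, aU2]
  congr 1
  exact Finset.sum_congr rfl fun ι _ => by rw [acoef_swap12 hsym]

theorem aU3_symm12 (hsym : aSym a) (i j k : Fin n) (q : Fin n → ℝ) :
    aU3 a i j k q = aU3 a j i k q := by
  rw [aU3, aU3]
  congr 1
  exact Finset.sum_congr rfl fun ι _ => by rw [acoef_swap12 hsym]

theorem aU3_symm23 (hsym : aSym a) (i j k : Fin n) (q : Fin n → ℝ) :
    aU3 a i j k q = aU3 a i k j q := by
  rw [aU3, aU3]
  congr 1
  refine Finset.sum_congr rfl fun ι _ => ?_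
  congr 1
  calc a (Fin.cons i (Fin.cons j (Fin.cons k ι)))
      = a (Fin.cons i ((Fin.cons k (Fin.cons j ι)) ∘ (Equiv.swap 0 1))) := by
        rw [cons_cons_swap]
    _ = a (Fin.cons i (Fin.cons k (Fin.cons j ι))) :=
        sym_cons hsym i (Equiv.swap 0 1) (Fin.cons k (Fin.cons j ι))

theorem Kfun_pow_top {q : Fin n → ℝ} (hq : 0 < Afun a q) :
    Kfun a q ^ (M+3) = Afun a q := by
  rw [Kfun_pow hq]
  push_cast
  rw [div_self (by positivity), Real.rpow_one]

theorem euler0 {q : Fin n → ℝ} (hq : 0 < Afun a q) :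
    ∑ x, q x * aU1 a x q = Kfun a q := by
  have hKne : Kfun a q ≠ 0 := (Kfun_pos hq).ne'
  have h1 : ∑ x, q x * aU1 a x q
      = (∑ x, q x * Psum (fun ι => a (Fin.cons x ι)) q) / Kfun a q ^ (M+2) := by
    rw [Finset.sum_div]
    exact Finset.sum_congr rfl fun x _ => by rw [aU1_eq]; ring
  rw [h1, ← Psum_succ a q]
  have h2 : Psum a q = Kfun a q ^ (M+3) := (Kfun_pow_top hq).symm
  rw [h2, pow_succ]
  field_simp

theorem euler1 {q : Fin n → ℝ} (hq : 0 < Afun a q) (i : Fin n) :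
    ∑ x, q x * aU2 a i x q = Kfun a q * aU1 a i q := by
  have hKne : Kfun a q ≠ 0 := (Kfun_pos hq).ne'
  have h1 : ∑ x, q x * aU2 a i x q
      = (∑ x, q x * Psum (fun ι => a (Fin.cons i (Fin.cons x ι))) q) / Kfun a q ^ (M+1) := by
    rw [Finset.sum_div]
    exact Finset.sum_congr rfl fun x _ => by rw [aU2_eq]; ring
  rw [h1, ← Psum_succ (fun ι => a (Fin.cons i ι)) q, aU1_eq, pow_succ]
  field_simp
  ring

theorem euler2 {q : Fin n → ℝ} (hq : 0 < Afun a q) (i j : Fin n) :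
    ∑ x, q x * aU3 a i j x q = Kfun a q * aU2 a i j q := by
  have hKne : Kfun a q ≠ 0 := (Kfun_pos hq).ne'
  have h1 : ∑ x, q x * aU3 a i j x q
      = (∑ x, q x * Psum (fun ι => a (Fin.cons i (Fin.cons j (Fin.cons x ι)))) q)
          / Kfun a q ^ M := by
    rw [Finset.sum_div]
    exact Finset.sum_congr rfl fun x _ => by rw [aU3_eq]; ring
  rw [h1, ← Psum_succ (fun ι => a (Fin.cons i (Fin.cons j ι))) q, aU2_eq, pow_succ]
  field_simp

end Core4

set_option maxHeartbeats 1600000 in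
/-- `C_i^{jk} = -((m-2)/(2K)) [a_i^{jk} - (δ_i^j a^k + δ_i^k a^j)
+ a_i (2 a^j a^k - a^{jk})]`, where `m = M + 3`. -/
theorem stmt_6 {n M : ℕ} (hn : 4 ≤ n) (a : (Fin (M + 3) → Fin n) → ℝ)
    (hsym : aSym a) (p : Fin n → ℝ) (hA : 0 < Afun a p)
    (aLow : Matrix (Fin n) (Fin n) ℝ)
    (hInv₁ : (Matrix.of fun i j => aU2 a i j p) * aLow = 1)
    (hInv₂ : aLow * (Matrix.of fun i j => aU2 a i j p) = 1) :
    ∀ i j k : Fin n,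
      CL a aLow p i j k = -((M + 1 : ℝ) / (2 * Kfun a p)) *
        (aL3 a aLow p i j k -
          ((if i = j then (1 : ℝ) else 0) * aU1 a k p +
            (if i = k then (1 : ℝ) else 0) * aU1 a j p) +
          aL a aLow p i * (2 * (aU1 a j p * aU1 a k p) - aU2 a j k p)) := by
  intro i j k
  have hKpos : 0 < Kfun a p := Kfun_pos hA
  have hKne : Kfun a p ≠ 0 := hKpos.ne'
  have hM2 : ((M:ℝ) + 2) ≠ 0 := by positivity
  have hInvE : ∀ x y : Fin n,
      (∑ s, aLow x s * aU2 a s y p) = if x = y then (1:ℝ) else 0 := by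
    intro x y
    have h := congrFun (congrFun hInv₂ x) y
    simpa [Matrix.mul_apply, Matrix.one_apply] using h
  have haL : ∀ x, aL a aLow p x = p x / Kfun a p := by
    intro x
    have h1 : Kfun a p * aL a aLow p x = p x := by
      rw [aL, Finset.mul_sum]
      calc ∑ s, Kfun a p * (aLow x s * aU1 a s p)
          = ∑ s, aLow x s * (∑ y, p y * aU2 a s y p) := by
            refine Finset.sum_congr rfl fun s _ => ?_
            rw [euler1 hA s]
            ring
        _ = ∑ s, ∑ y, p y * (aLow x s * aU2 a s y p) := by
            refine Finset.sum_congr rfl fun s _ => ?_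
            rw [Finset.mul_sum]
            exact Finset.sum_congr rfl fun y _ => by ring
        _ = ∑ y, p y * (∑ s, aLow x s * aU2 a s y p) := by
            rw [Finset.sum_comm]
            exact Finset.sum_congr rfl fun y _ => by rw [Finset.mul_sum]
        _ = ∑ y, p y * (if x = y then 1 else 0) := by
            exact Finset.sum_congr rfl fun y _ => by rw [hInvE x y]
        _ = p x := by simp
    field_simp at h1 ⊢
    linarith
  have hCU : ∀ s, CU a s j k p = -(((M:ℝ)+2)*((M:ℝ)+1)/(2*Kfun a p)) *
      (aU3 a s j k p - aU1 a k p * aU2 a s j p - aU1 a j p * aU2 a s k p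
        - aU1 a s p * aU2 a j k p + 2 * (aU1 a s p * aU1 a j p * aU1 a k p)) := by
    intro s
    rw [CU_eq hsym hA s j k, aU3_symm12 hsym j s k, aU2_symm hsym j s]
  set K := Kfun a p with hK
  set uj := aU1 a j p with huj
  set uk := aU1 a k p with huk
  set w := aU2 a j k p with hw
  have c0 : ℝ := ((M:ℝ)+2)*((M:ℝ)+1)/(2*K)
  have hsummand : ∀ s, gL a aLow p i s * CU a s j k p =
      (-((((M:ℝ)+2)*((M:ℝ)+1)/(2*K)) * (1/((M:ℝ)+2)))) * (aLow i s * aU3 a s j k p)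
    + ((((M:ℝ)+2)*((M:ℝ)+1)/(2*K)) * (1/((M:ℝ)+2)) * uk) * (aLow i s * aU2 a s j p)
    + ((((M:ℝ)+2)*((M:ℝ)+1)/(2*K)) * (1/((M:ℝ)+2)) * uj) * (aLow i s * aU2 a s k p)
    + ((((M:ℝ)+2)*((M:ℝ)+1)/(2*K)) * (1/((M:ℝ)+2)) * (w - 2*uj*uk)) * (aLow i s * aU1 a s p)
    + (-((((M:ℝ)+2)*((M:ℝ)+1)/(2*K)) * (((M:ℝ)+1)/((M:ℝ)+2)) * p i / K^2))
        * (p s * aU3 a s j k p)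
    + ((((M:ℝ)+2)*((M:ℝ)+1)/(2*K)) * (((M:ℝ)+1)/((M:ℝ)+2)) * p i * uk / K^2)
        * (p s * aU2 a s j p)
    + ((((M:ℝ)+2)*((M:ℝ)+1)/(2*K)) * (((M:ℝ)+1)/((M:ℝ)+2)) * p i * uj / K^2)
        * (p s * aU2 a s k p)
    + ((((M:ℝ)+2)*((M:ℝ)+1)/(2*K)) * (((M:ℝ)+1)/((M:ℝ)+2)) * p i * (w - 2*uj*uk) / K^2)
        * (p s * aU1 a s p) := by
    intro s
    rw [hCU s, gL, haL s, haL i]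
    field_simp
    ring
  rw [CL]
  rw [Finset.sum_congr rfl fun s _ => hsummand s]
  simp only [Finset.sum_add_distrib, ← Finset.mul_sum]
  have e1 : (∑ s, aLow i s * aU3 a s j k p) = aL3 a aLow p i j k := rfl
  have e4 : (∑ s, aLow i s * aU1 a s p) = p i / K := haL i
  have e5 : (∑ s, p s * aU3 a s j k p) = K * w := by
    calc (∑ s, p s * aU3 a s j k p) = ∑ s, p s * aU3 a j k s p := by
          refine Finset.sum_congr rfl fun s _ => ?_
          rw [aU3_symm12 hsym s j k, aU3_symm23 hsym j s k]
      _ = K * w := euler2 hA j k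
  have e6 : (∑ s, p s * aU2 a s j p) = K * uj := by
    calc (∑ s, p s * aU2 a s j p) = ∑ s, p s * aU2 a j s p := by
          exact Finset.sum_congr rfl fun s _ => by rw [aU2_symm hsym s j]
      _ = K * uj := euler1 hA j
  have e7 : (∑ s, p s * aU2 a s k p) = K * uk := by
    calc (∑ s, p s * aU2 a s k p) = ∑ s, p s * aU2 a k s p := by
          exact Finset.sum_congr rfl fun s _ => by rw [aU2_symm hsym s k]
      _ = K * uk := euler1 hA k
  have e8 : (∑ s, p s * aU1 a s p) = K := euler0 hA
  rw [e1, hInvE i j, hInvE i k, e4, e5, e6, e7, e8, haL i]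
  set dij := (if i = j then (1:ℝ) else 0) with hdij
  set dik := (if i = k then (1:ℝ) else 0) with hdik
  field_simp
  ring
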